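/- arXiv:2003.10028 — 2 statements merged into one kernel-verified Lean document; each statement's English description precedes it below -/
import Mathlib

section
/- Let h : ℝ → ℝ be continuously differentiable along a solution of an ODE, and suppose ḣ(t) ≥ -α(h(t)) for all t, where α : ℝ → ℝ is locally Lipschitz, strictly increasing, and α(0) = 0. If h(t₀) ≥ 0, then h(t) ≥ 0 for all t ≥ t₀ in the interval of existence. -/
open Set

/-- Comparison lemma for barrier functions: if ḣ(t) ≥ -α(h(t)) with α locally
Lipschitz, strictly increasing, α(0) = 0, and h(t₀) ≥ 0, then h(t) ≥ 0 on the
interval of existence [t₀, T). -/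
theorem barrier_comparison (t₀ T : ℝ) (h h' : ℝ → ℝ) (α : ℝ → ℝ)
    (hα_lip : LocallyLipschitz α) (hα_mono : StrictMono α) (hα0 : α 0 = 0)
    (hderiv : ∀ t ∈ Ico t₀ T, HasDerivAt h (h' t) t)
    (hineq : ∀ t ∈ Ico t₀ T, h' t ≥ -α (h t))
    (h0 : h t₀ ≥ 0) :
    ∀ t ∈ Ico t₀ T, h t ≥ 0 := by
  intro t₁ ht₁
  obtain ⟨ht₀t₁, ht₁T⟩ := ht₁
  by_contra hneg
  push_neg at hneg
  have hcont : ContinuousOn h (Icc t₀ t₁) := by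
    intro x hx
    exact ((hderiv x ⟨hx.1, lt_of_le_of_lt hx.2 ht₁T⟩).continuousAt).continuousWithinAt
  set S : Set ℝ := Icc t₀ t₁ ∩ h ⁻¹' (Ici 0) with hS
  have hSne : S.Nonempty := ⟨t₀, ⟨le_refl _, ht₀t₁⟩, h0⟩
  have hSbdd : BddAbove S := ⟨t₁, fun x hx => hx.1.2⟩
  have hSclosed : IsClosed S :=
    hcont.preimage_isClosed_of_isClosed isClosed_Icc isClosed_Ici
  set s := sSup S with hs
  have hsS : s ∈ S := hSclosed.csSup_mem hSne hSbdd
  have hst₀ : t₀ ≤ s := hsS.1.1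
  have hst₁ : s ≤ t₁ := hsS.1.2
  have hhs : 0 ≤ h s := hsS.2
  have hslt : s < t₁ := lt_of_le_of_ne hst₁ (fun e => by rw [e] at hhs; linarith)
  have hneg' : ∀ x ∈ Ioc s t₁, h x < 0 := by
    intro x hx
    by_contra hge
    push_neg at hge
    have : x ∈ S := ⟨⟨le_trans hst₀ hx.1.le, hx.2⟩, hge⟩
    exact absurd (le_csSup hSbdd this) (not_le.mpr hx.1)
  have hmono : MonotoneOn h (Icc s t₁) := by
    apply monotoneOn_of_deriv_nonneg (convex_Icc s t₁)
      (hcont.mono (Icc_subset_Icc hst₀ le_rfl))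
    · rw [interior_Icc]
      intro x hx
      exact ((hderiv x ⟨le_trans hst₀ hx.1.le, lt_trans hx.2 ht₁T⟩).differentiableAt).differentiableWithinAt
    · rw [interior_Icc]
      intro x hx
      have hxm : x ∈ Ico t₀ T := ⟨le_trans hst₀ hx.1.le, lt_trans hx.2 ht₁T⟩
      rw [(hderiv x hxm).deriv]
      have hx0 : h x < 0 := hneg' x ⟨hx.1, hx.2.le⟩
      have : α (h x) < 0 := by
        have := hα_mono hx0
        rwa [hα0] at this
      have := hineq x hxm
      linarith
  have := hmono ⟨le_rfl, hst₁⟩ ⟨hst₁, le_rfl⟩ hst₁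
  linarith
end

section
/- Let h_r : ℝⁿ × ℝ^p → ℝ be continuously differentiable and define h(t) = h_r(x(t), θ̂(t)) - (1/2)θ̃(t)ᵀΓ⁻¹θ̃(t) along a solution of ẋ = f(x) - Δ(x)ᵀθ + B(x)u(t) with adaptation law θ̂' = ΓΔ(x)(∂h_r/∂x)ᵀ, θ constant, θ̃ = θ̂ - θ. Then ḣ(t) = ∂h_r/∂x · (f(x) - Δ(x)ᵀΛ(x,θ̂) + B(x)u), where Λ(x,θ̂) = θ̂ - Γ(∂h_r/∂θ̂)ᵀ. In particular, if the control u satisfies the RaCBF inequality ∂h_r/∂x · (f - ΔᵀΛ + Bu) ≥ -α(h_r - (1/2)ϑ̃ᵀΓ⁻¹ϑ̃) with ‖θ̃(t)‖ ≤ ‖ϑ̃‖, then ḣ ≥ -α(h). -/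
open Matrix

private lemma quad_deriv {p : ℕ} (M : Matrix (Fin p) (Fin p) ℝ)
    (w : ℝ → Fin p → ℝ) (d : Fin p → ℝ) (t : ℝ)
    (hw : HasDerivAt w d t) :
    HasDerivAt (fun s => w s ⬝ᵥ (M *ᵥ w s))
      (d ⬝ᵥ (M *ᵥ w t) + w t ⬝ᵥ (M *ᵥ d)) t := by
  have hwi : ∀ i, HasDerivAt (fun s => w s i) (d i) t := fun i =>
    (hasDerivAt_pi.mp hw) i
  have hMi : ∀ i, HasDerivAt (fun s => (M *ᵥ w s) i) ((M *ᵥ d) i) t := by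
    intro i
    simpa [Matrix.mulVec, dotProduct] using
      HasDerivAt.fun_sum (fun j _ => (hwi j).const_mul (M i j))
  have h : HasDerivAt (fun s => ∑ i, w s i * (M *ᵥ w s) i)
      (∑ i, (d i * (M *ᵥ w t) i + w t i * (M *ᵥ d) i)) t :=
    HasDerivAt.fun_sum fun i _ => (hwi i).mul (hMi i)
  simpa [dotProduct, Finset.sum_add_distrib] using h

/-- RaCBF derivative identity: for h(t) = h_r(x(t),θ̂(t)) - (1/2)θ̃ᵀΓ⁻¹θ̃ with
adaptation law θ̂' = ΓΔ(x)(∂h_r/∂x)ᵀ, one has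
ḣ = ∂h_r/∂x · (f - ΔᵀΛ(x,θ̂) + Bu); and if u satisfies the RaCBF inequality
with bound ϑ̃ on the parameter error, then ḣ ≥ -α(h). -/
theorem racbf_derivative (n m p : ℕ)
    (f : (Fin n → ℝ) → (Fin n → ℝ))
    (Δ : (Fin n → ℝ) → Matrix (Fin p) (Fin n) ℝ)
    (B : (Fin n → ℝ) → Matrix (Fin n) (Fin m) ℝ)
    (Γ : Matrix (Fin p) (Fin p) ℝ) (hΓ : Γ.PosDef) (hΓsym : Γ.IsSymm)
    (θ : Fin p → ℝ) (ϑ : Fin p → ℝ)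
    (hr : (Fin n → ℝ) → (Fin p → ℝ) → ℝ)
    (α : ℝ → ℝ) (hα_mono : StrictMono α) (hα0 : α 0 = 0)
    (x : ℝ → (Fin n → ℝ)) (θhat : ℝ → (Fin p → ℝ)) (u : ℝ → (Fin m → ℝ))
    -- gx t, gθ t : gradients of h_r in x and θ̂ along the trajectory
    (gx : ℝ → (Fin n → ℝ)) (gθ : ℝ → (Fin p → ℝ))
    (hdyn : ∀ t, HasDerivAt x (f (x t) - (Δ (x t))ᵀ *ᵥ θ + (B (x t)) *ᵥ u t) t)
    (hadapt : ∀ t, HasDerivAt θhat (Γ *ᵥ (Δ (x t) *ᵥ gx t)) t)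
    (hchain : ∀ t, HasDerivAt (fun s => hr (x s) (θhat s))
      (gx t ⬝ᵥ (f (x t) - (Δ (x t))ᵀ *ᵥ θ + (B (x t)) *ᵥ u t) +
        gθ t ⬝ᵥ (Γ *ᵥ (Δ (x t) *ᵥ gx t))) t)
    -- parameter-error bound ‖θ̃(t)‖ ≤ ‖ϑ̃‖ (in the Γ⁻¹-weighted norm)
    (hbound : ∀ t, (θhat t - θ) ⬝ᵥ (Γ⁻¹ *ᵥ (θhat t - θ)) ≤ ϑ ⬝ᵥ (Γ⁻¹ *ᵥ ϑ)) :
    ∀ t,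
      HasDerivAt (fun s => hr (x s) (θhat s)
          - (1 / 2) * ((θhat s - θ) ⬝ᵥ (Γ⁻¹ *ᵥ (θhat s - θ))))
        (gx t ⬝ᵥ (f (x t) - (Δ (x t))ᵀ *ᵥ (θhat t - Γ *ᵥ gθ t)
          + (B (x t)) *ᵥ u t)) t ∧
      (gx t ⬝ᵥ (f (x t) - (Δ (x t))ᵀ *ᵥ (θhat t - Γ *ᵥ gθ t) + (B (x t)) *ᵥ u t)
          ≥ -α (hr (x t) (θhat t) - (1 / 2) * (ϑ ⬝ᵥ (Γ⁻¹ *ᵥ ϑ))) →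
        gx t ⬝ᵥ (f (x t) - (Δ (x t))ᵀ *ᵥ (θhat t - Γ *ᵥ gθ t) + (B (x t)) *ᵥ u t)
          ≥ -α (hr (x t) (θhat t)
              - (1 / 2) * ((θhat t - θ) ⬝ᵥ (Γ⁻¹ *ᵥ (θhat t - θ))))) := by
  have hdet : IsUnit Γ.det := isUnit_iff_ne_zero.mpr (ne_of_gt hΓ.det_pos)
  have hinv : Γ⁻¹ * Γ = 1 := Matrix.nonsing_inv_mul Γ hdet
  have hinvsym : Γ⁻¹ᵀ = Γ⁻¹ := by
    rw [Matrix.transpose_nonsing_inv, hΓsym.eq]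
  intro t
  set v := Γ *ᵥ (Δ (x t) *ᵥ gx t) with hv
  have hw : HasDerivAt (fun s => θhat s - θ) v t := (hadapt t).sub_const θ
  have hq := quad_deriv Γ⁻¹ (fun s => θhat s - θ) v t hw
  have hsum := (hchain t).sub (hq.const_mul (1/2 : ℝ))
  -- scalar identities
  have e2 : ∀ z : Fin p → ℝ, Γ⁻¹ *ᵥ (Γ *ᵥ z) = z := by
    intro z; rw [Matrix.mulVec_mulVec, hinv, Matrix.one_mulVec]
  have e3 : v ⬝ᵥ (Γ⁻¹ *ᵥ (θhat t - θ)) = (θhat t - θ) ⬝ᵥ (Γ⁻¹ *ᵥ v) := by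
    rw [Matrix.dotProduct_mulVec, ← Matrix.vecMul_transpose, hinvsym,
      dotProduct_comm]
  have e1 : ∀ z : Fin p → ℝ, gx t ⬝ᵥ ((Δ (x t))ᵀ *ᵥ z) = z ⬝ᵥ (Δ (x t) *ᵥ gx t) := by
    intro z
    rw [Matrix.dotProduct_mulVec, ← Matrix.mulVec_transpose, Matrix.transpose_transpose,
      dotProduct_comm]
  have hvm : gθ t ᵥ* Γ = Γ *ᵥ gθ t := by
    nth_rewrite 1 [← hΓsym.eq]
    exact Matrix.vecMul_transpose Γ (gθ t)
  have e4 : gθ t ⬝ᵥ v = (Γ *ᵥ gθ t) ⬝ᵥ (Δ (x t) *ᵥ gx t) := by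
    rw [hv, Matrix.dotProduct_mulVec, hvm]
  have key : gx t ⬝ᵥ (f (x t) - (Δ (x t))ᵀ *ᵥ (θhat t - Γ *ᵥ gθ t)
      + (B (x t)) *ᵥ u t)
      = gx t ⬝ᵥ (f (x t) - (Δ (x t))ᵀ *ᵥ θ + (B (x t)) *ᵥ u t) +
        gθ t ⬝ᵥ v -
        (1/2) * (v ⬝ᵥ (Γ⁻¹ *ᵥ (θhat t - θ)) +
          (θhat t - θ) ⬝ᵥ (Γ⁻¹ *ᵥ v)) := by
    rw [e3, hv, e2]
    simp only [dotProduct_add, dotProduct_sub, sub_dotProduct,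
      Matrix.mulVec_sub, e1, e4]
    rw [← hv, e4]
    ring
  constructor
  · rw [key]; exact hsum
  · intro hu
    refine le_trans ?_ hu
    rw [neg_le_neg_iff]
    have := hbound t
    exact hα_mono.le_iff_le.mpr (by linarith)
end
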